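/- Let S = (s, t) ∈ ℝ^{2m×2} have full column rank, δ_j = (det(SᵀS))^{1/4}, and δ ≥ δ_j. With č = ‖s‖₂/δ and f̌ = (sᵀt ± √(δ⁴ − det(SᵀS)))/(‖s‖₂ δ), both columns of S Ď⁻¹ have Euclidean norm δ, where Ď = [[č, f̌],[0, č⁻¹]]. -/

import Mathlib

open Matrix
open scoped RealInnerProductSpace

noncomputable def enorm₂ {m : ℕ} (v : Fin m → ℝ) : ℝ := Real.sqrt (∑ i, v i ^ 2)

noncomputable def frob {m n : ℕ} (A : Matrix (Fin m) (Fin n) ℝ) : ℝ :=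
  Real.sqrt (∑ i, ∑ j, A i j ^ 2)

noncomputable def specNorm {m n : ℕ} (A : Matrix (Fin m) (Fin n) ℝ) : ℝ :=
  ‖(Matrix.toEuclideanLin A).toContinuousLinearMap‖

theorem Matrix.isHermitian_transpose_mul_self {m n α : Type*} [Fintype m] [CommSemiring α]
    [StarRing α] [TrivialStar α] (A : Matrix m n α) : (Aᵀ * A).IsHermitian := by
  simpa [Matrix.conjTranspose_eq_transpose_of_trivial] using Matrix.isHermitian_conjTranspose_mul_self A

noncomputable def sigmaMax (B : Matrix (Fin 2) (Fin 2) ℝ) : ℝ :=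
  Real.sqrt (max ((Matrix.isHermitian_transpose_mul_self B).eigenvalues 0)
                 ((Matrix.isHermitian_transpose_mul_self B).eigenvalues 1))

noncomputable def sigmaMin (B : Matrix (Fin 2) (Fin 2) ℝ) : ℝ :=
  Real.sqrt (min ((Matrix.isHermitian_transpose_mul_self B).eigenvalues 0)
                 ((Matrix.isHermitian_transpose_mul_self B).eigenvalues 1))

lemma key_alg (a2 b2 p δ u a fc cc d : ℝ) (hane : a ≠ 0) (hδne : δ ≠ 0)
    (haa : a ^ 2 = a2) (hd : d = a2 * b2 - p ^ 2)
    (hu : u ^ 2 = δ ^ 4 - d)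
    (hfc : fc = (p + u) / (a * δ)) (hcc : cc = a / δ) :
    fc ^ 2 * a2 - 2 * (fc * cc) * p + cc ^ 2 * b2 = δ ^ 2 := by
  subst hfc hcc hd haa
  field_simp
  linear_combination hu

theorem columns_of_equilibrated_column_scaling {m : ℕ}
    (S : Matrix (Fin (2*m)) (Fin 2) ℝ)
    (hSI : LinearIndependent ℝ ![fun i => S i 0, fun i => S i 1])
    (δj δ : ℝ)
    (hδj : δj = Real.sqrt (Real.sqrt (Sᵀ * S).det))
    (hδ : δj ≤ δ)
    (ε : ℝ) (hε : ε = 1 ∨ ε = -1)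
    (cc fc : ℝ)
    (hcc : cc = enorm₂ (fun i => S i 0) / δ)
    (hfc : fc = ((∑ i, S i 0 * S i 1) + ε * Real.sqrt (δ ^ 4 - (Sᵀ * S).det)) /
        (enorm₂ (fun i => S i 0) * δ)) :
    enorm₂ (fun i => (S * (!![cc⁻¹, -fc; 0, cc] : Matrix (Fin 2) (Fin 2) ℝ)) i 0) = δ ∧
    enorm₂ (fun i => (S * (!![cc⁻¹, -fc; 0, cc] : Matrix (Fin 2) (Fin 2) ℝ)) i 1) = δ := by
  set a2 : ℝ := ∑ i, S i 0 ^ 2 with ha2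
  set b2 : ℝ := ∑ i, S i 1 ^ 2 with hb2
  set p : ℝ := ∑ i, S i 0 * S i 1 with hp
  have ha2nn : 0 ≤ a2 := Finset.sum_nonneg fun i _ => sq_nonneg _
  have hbnn : 0 ≤ b2 := Finset.sum_nonneg fun i _ => sq_nonneg _
  set x : EuclideanSpace ℝ (Fin (2*m)) := (WithLp.equiv 2 _).symm (fun i => S i 0) with hx
  set y : EuclideanSpace ℝ (Fin (2*m)) := (WithLp.equiv 2 _).symm (fun i => S i 1) with hy
  have hnx : ‖x‖ = Real.sqrt a2 := by
    rw [EuclideanSpace.norm_eq]; congr 1; exact Finset.sum_congr rfl fun i _ => by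
      simp [hx, Real.norm_eq_abs, sq_abs]
  have hny : ‖y‖ = Real.sqrt b2 := by
    rw [EuclideanSpace.norm_eq]; congr 1; exact Finset.sum_congr rfl fun i _ => by
      simp [hy, Real.norm_eq_abs, sq_abs]
  have hinner : ⟪x, y⟫ = p := by
    simp [hx, hy, PiLp.inner_apply, RCLike.inner_apply, hp]
    exact Finset.sum_congr rfl fun i _ => mul_comm _ _
  have hpair := LinearIndependent.pair_iff.mp hSI
  -- x ≠ 0, y ≠ 0
  have hx0 : x ≠ 0 := by
    intro h
    have := (hpair 1 0 (by
      simp only [one_smul, zero_smul, add_zero]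
      funext i; exact congrFun (congrArg (WithLp.equiv 2 _) h) i)).1
    norm_num at this
  have hy0 : y ≠ 0 := by
    intro h
    have := (hpair 0 1 (by
      simp only [one_smul, zero_smul, zero_add]
      funext i; exact congrFun (congrArg (WithLp.equiv 2 _) h) i)).2
    norm_num at this
  have hxnorm_pos : 0 < ‖x‖ := norm_pos_iff.mpr hx0
  have hynorm_pos : 0 < ‖y‖ := norm_pos_iff.mpr hy0
  -- strict Cauchy-Schwarz both ways
  have hcs1 : ⟪x, y⟫ < ‖x‖ * ‖y‖ := by
    rw [inner_lt_norm_mul_iff_real]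
    intro h
    have hcomb : ‖y‖ • (fun i => S i 0) + (-‖x‖) • (fun i => S i 1) = (0 : Fin (2*m) → ℝ) := by
      funext i
      have := congrFun (congrArg (WithLp.equiv 2 _) h) i
      simp [hx, hy] at this
      have h1 : ‖y‖ * S i 0 = ‖x‖ * S i 1 := this
      simp only [Pi.add_apply, Pi.smul_apply, smul_eq_mul, Pi.zero_apply]
      linarith
    exact absurd ((hpair _ _ hcomb).1) (ne_of_gt hynorm_pos)
  have hcs2 : -⟪x, y⟫ < ‖x‖ * ‖y‖ := by
    have := @inner_lt_norm_mul_iff_real (EuclideanSpace ℝ (Fin (2*m))) _ _ (-x) y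
    rw [inner_neg_left, norm_neg] at this
    rw [this]
    intro h
    have hcomb : (-‖y‖) • (fun i => S i 0) + (-‖x‖) • (fun i => S i 1) = (0 : Fin (2*m) → ℝ) := by
      funext i
      have := congrFun (congrArg (WithLp.equiv 2 _) h) i
      simp [hx, hy] at this
      have h1 : -(‖y‖ * S i 0) = ‖x‖ * S i 1 := this
      simp only [Pi.add_apply, Pi.smul_apply, smul_eq_mul, Pi.zero_apply]
      linarith
    have := (hpair _ _ hcomb).1
    simp only [neg_eq_zero] at this
    exact absurd this (ne_of_gt hynorm_pos)
  -- determinant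
  have hdet : (Sᵀ * S).det = a2 * b2 - p ^ 2 := by
    rw [Matrix.det_fin_two]
    simp only [Matrix.mul_apply, Matrix.transpose_apply]
    rw [ha2, hb2, hp]
    congr 1
    · congr 1 <;> exact Finset.sum_congr rfl fun i _ => by ring
    · rw [sq]
      congr 1
  -- norms squared
  have hxa : ‖x‖ ^ 2 = a2 := by rw [hnx, Real.sq_sqrt ha2nn]
  have hyb : ‖y‖ ^ 2 = b2 := by rw [hny, Real.sq_sqrt hbnn]
  have ha2pos : 0 < a2 := by rw [← hxa]; positivity
  have hdpos : 0 < (Sᵀ * S).det := by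
    rw [hdet]
    have h1 : 0 < ‖x‖ * ‖y‖ - p := by rw [← hinner]; linarith
    have h2 : 0 < ‖x‖ * ‖y‖ + p := by rw [← hinner]; linarith
    nlinarith [mul_pos h1 h2]
  -- δ positivity
  have hδjpos : 0 < δj := by
    rw [hδj]; exact Real.sqrt_pos.mpr (Real.sqrt_pos.mpr hdpos)
  have hδpos : 0 < δ := lt_of_lt_of_le hδjpos hδ
  have hδj4 : δj ^ 4 = (Sᵀ * S).det := by
    rw [hδj, show (4:ℕ) = 2*2 from rfl, pow_mul,
      Real.sq_sqrt (Real.sqrt_nonneg _), Real.sq_sqrt hdpos.le]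
  have hδ4 : (Sᵀ * S).det ≤ δ ^ 4 := by
    rw [← hδj4]
    exact pow_le_pow_left₀ hδjpos.le hδ 4
  set r : ℝ := Real.sqrt (δ ^ 4 - (Sᵀ * S).det) with hr
  have hr2 : r ^ 2 = δ ^ 4 - (Sᵀ * S).det := Real.sq_sqrt (by linarith)
  have hε2 : ε ^ 2 = 1 := by rcases hε with h | h <;> rw [h] <;> norm_num
  -- the norm of the first column
  set a : ℝ := Real.sqrt a2 with ha
  have hea : enorm₂ (fun i => S i 0) = a := by rw [enorm₂]
  have hapos : 0 < a := Real.sqrt_pos.mpr ha2pos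
  have haa : a ^ 2 = a2 := Real.sq_sqrt ha2nn
  rw [hea] at hcc hfc
  have hccpos : 0 < cc := by rw [hcc]; positivity
  have hccinv : cc⁻¹ = δ / a := by rw [hcc]; field_simp
  constructor
  · have hcol : ∀ i, (S * (!![cc⁻¹, -fc; 0, cc] : Matrix (Fin 2) (Fin 2) ℝ)) i 0
        = S i 0 * cc⁻¹ := by
      intro i
      simp [Matrix.mul_apply, Fin.sum_univ_two]
    rw [enorm₂]
    simp_rw [hcol, mul_pow]
    rw [← Finset.sum_mul, ← ha2, Real.sqrt_mul ha2nn, Real.sqrt_sq (by positivity), ← ha,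
      hccinv]
    field_simp
  · have hcol : ∀ i, (S * (!![cc⁻¹, -fc; 0, cc] : Matrix (Fin 2) (Fin 2) ℝ)) i 1
        = S i 0 * (-fc) + S i 1 * cc := by
      intro i
      simp [Matrix.mul_apply, Fin.sum_univ_two]
    rw [enorm₂]
    simp_rw [hcol]
    have hexp : ∀ i, (S i 0 * (-fc) + S i 1 * cc) ^ 2
        = fc ^ 2 * S i 0 ^ 2 - 2 * (fc * cc) * (S i 0 * S i 1) + cc ^ 2 * S i 1 ^ 2 :=
      fun i => by ring
    simp_rw [hexp]
    rw [Finset.sum_add_distrib, Finset.sum_sub_distrib, ← Finset.mul_sum, ← Finset.mul_sum,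
      ← Finset.mul_sum, ← ha2, ← hb2, ← hp]
    have hu : (ε * r) ^ 2 = δ ^ 4 - (Sᵀ * S).det := by
      rw [mul_pow, hε2, one_mul, hr2]
    have key : fc ^ 2 * a2 - 2 * (fc * cc) * p + cc ^ 2 * b2 = δ ^ 2 :=
      key_alg a2 b2 p δ (ε * r) a fc cc ((Sᵀ * S).det) (ne_of_gt hapos) (ne_of_gt hδpos)
        haa hdet hu hfc hcc
    rw [key, Real.sqrt_sq hδpos.le]
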